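/- (Energy-rate lemma.) Let m > 0 and e be real constants, let v : ℝ → ℝ³ be differentiable with ‖v(t)‖ < 1 for all t, and let E, B : ℝ → ℝ³ be maps such that for all t the relativistic equation of motion holds: (m/√(1 − ‖v(t)‖²))·v′(t) = e·( E(t) − ⟪v(t), E(t)⟫·v(t) + v(t) × B(t) ). Then for every t the function s ↦ m/√(1 − ‖v(s)‖²) is differentiable at t with derivative e·⟪v(t), E(t)⟫. -/

import Mathlib

open scoped RealInnerProductSpace

/-- The cross product on Euclidean 3-space. -/
noncomputable def cross3 (a b : EuclideanSpace ℝ (Fin 3)) : EuclideanSpace ℝ (Fin 3) :=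
  (WithLp.equiv 2 (Fin 3 → ℝ)).symm
    ![a 1 * b 2 - a 2 * b 1, a 2 * b 0 - a 0 * b 2, a 0 * b 1 - a 1 * b 0]

lemma inner_cross3_self (a b : EuclideanSpace ℝ (Fin 3)) : ⟪a, cross3 a b⟫ = 0 := by
  have h : ∀ i, cross3 a b i
      = ![a 1 * b 2 - a 2 * b 1, a 2 * b 0 - a 0 * b 2, a 0 * b 1 - a 1 * b 0] i :=
    fun i => rfl
  simp only [PiLp.inner_apply, RCLike.inner_apply, conj_trivial, Fin.sum_univ_three, h]
  simp [Matrix.cons_val_zero, Matrix.cons_val_one, Matrix.head_cons]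
  ring

/-- Energy-rate lemma: along a solution of the relativistic
Lorentz-force equation of motion, the relativistic energy `m/√(1 − ‖v‖²)` is
differentiable with derivative `e·⟪v, E⟫`. -/
theorem stmt_12 (m e : ℝ) (hm : 0 < m)
    (v Ef Bf : ℝ → EuclideanSpace ℝ (Fin 3))
    (hdiff : Differentiable ℝ v)
    (hlum : ∀ t : ℝ, ‖v t‖ < 1)
    (heqm : ∀ t : ℝ,
      (m / Real.sqrt (1 - ‖v t‖ ^ 2)) • deriv v t
        = e • (Ef t - ⟪v t, Ef t⟫ • v t + cross3 (v t) (Bf t))) :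
    ∀ t : ℝ,
      HasDerivAt (fun s => m / Real.sqrt (1 - ‖v s‖ ^ 2)) (e * ⟪v t, Ef t⟫) t := by
  intro t
  set g : ℝ := 1 - ‖v t‖ ^ 2 with hg_def
  have hg : 0 < g := by
    have := hlum t
    have := norm_nonneg (v t)
    rw [hg_def]
    nlinarith
  have hsg : 0 < Real.sqrt g := Real.sqrt_pos.mpr hg
  set v' : EuclideanSpace ℝ (Fin 3) := deriv v t with hv'_def
  have hv' : HasDerivAt v v' t := (hdiff t).hasDerivAt
  have hinner : HasDerivAt (fun s => ⟪v s, v s⟫) (⟪v t, v'⟫ + ⟪v', v t⟫) t :=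
    hv'.inner ℝ hv'
  have hn : HasDerivAt (fun s => (1 : ℝ) - ‖v s‖ ^ 2) (-(⟪v t, v'⟫ + ⟪v', v t⟫)) t := by
    have := (hasDerivAt_const t (1 : ℝ)).sub hinner
    simp only [real_inner_self_eq_norm_sq, zero_sub] at this
    exact this
  have hne : (1 : ℝ) - ‖v t‖ ^ 2 ≠ 0 := by rw [← hg_def]; exact ne_of_gt hg
  have hsqrt := hn.sqrt hne
  have hsne : Real.sqrt (1 - ‖v t‖ ^ 2) ≠ 0 := by rw [← hg_def]; exact ne_of_gt hsg
  have hderiv := (hasDerivAt_const t m).div hsqrt hsne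
  -- the scalar equation from the equation of motion
  have key : (m / Real.sqrt g) * ⟪v t, v'⟫ = e * ⟪v t, Ef t⟫ * g := by
    have h := congrArg (fun w => ⟪v t, w⟫) (heqm t)
    simp only [inner_smul_right, inner_sub_right, inner_add_right,
      inner_cross3_self, real_inner_self_eq_norm_sq] at h
    rw [← hg_def] at h
    rw [hv'_def]
    rw [h]; ring
  have hinn : ⟪v t, v'⟫ = e * ⟪v t, Ef t⟫ * g * Real.sqrt g / m := by
    field_simp at key ⊢
    nlinarith [key]
  have hgg : Real.sqrt g * Real.sqrt g = g := Real.mul_self_sqrt hg.le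
  refine HasDerivAt.congr_deriv hderiv ?_
  rw [← hg_def]
  have hcomm : ⟪v', v t⟫ = ⟪v t, v'⟫ := real_inner_comm _ _
  rw [hcomm, hinn]
  field_simp
  nlinarith [hgg, hsg, hg, hm, sq_nonneg (e * ⟪v t, Ef t⟫), congrArg (fun x => x * (e * ⟪v t, Ef t⟫)) (Real.sq_sqrt hg.le)]
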